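/- Let A = [[0, 32],[1/16, 8]] ∈ M₂(ℚ). Then Aⁿ has integer entries if and only if n belongs to the numerical semigroup ⟨4, 6, 9, 11⟩ = {0, 4, 6, 8, 9, 10} ∪ {n : n ≥ 12}. -/

import Mathlib

/-- The exponent set of a rational square matrix: those `n` with the `n`-th power integral. -/
def expSet {ι : Type*} [Fintype ι] [DecidableEq ι] (A : Matrix ι ι ℚ) : Set ℕ :=
  {n | ∀ i j, ((A ^ n) i j).den = 1}

namespace ExpAux

def p : ℕ → ℤ
  | 0 => 0
  | 1 => 1
  | n + 2 => 8 * p (n + 1) + 2 * p n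

def q : ℕ → ℤ
  | 0 => 1
  | n + 1 => 2 * p n

lemma p_succ (n : ℕ) : p (n + 1) = 8 * p n + q n := by
  cases n with
  | zero => simp [p, q]
  | succ m => simp [p, q]

lemma pow_eq (n : ℕ) :
    (!![(0 : ℚ), 32; 1/16, 8]) ^ n =
      !![(q n : ℚ), 32 * p n; (p n : ℚ) / 16, 8 * p n + q n] := by
  induction n with
  | zero =>
    simp [p, q, Matrix.one_fin_two]
  | succ m ih =>
    rw [pow_succ, ih, p_succ]
    ext i j
    fin_cases i <;> fin_cases j <;>
      simp [Matrix.mul_apply, Fin.sum_univ_succ, q] <;> ring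

lemma den_div16 (a : ℤ) : ((a : ℚ) / 16).den = 1 ↔ (16 : ℤ) ∣ a := by
  constructor
  · intro h
    rw [Rat.den_eq_one_iff] at h
    refine ⟨((a : ℚ) / 16).num, ?_⟩
    have : (a : ℚ) = 16 * ((a : ℚ) / 16).num := by
      rw [h]; ring
    exact_mod_cast this
  · rintro ⟨b, rfl⟩
    push_cast
    rw [mul_comm, mul_div_assoc]
    norm_num

lemma mem_expSet_iff (n : ℕ) :
    n ∈ expSet (!![(0 : ℚ), 32; 1/16, 8]) ↔ (16 : ℤ) ∣ p n := by
  constructor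
  · intro h
    have := h 1 0
    rw [pow_eq] at this
    simpa [den_div16] using this
  · intro h i j
    rw [pow_eq]
    fin_cases i <;> fin_cases j <;> simp [den_div16, h] <;>
      [skip; skip] <;>
      first
        | (rw [show (32 : ℚ) * (p n : ℚ) = ((32 * p n : ℤ) : ℚ) by push_cast; ring]
           exact Rat.den_intCast _)
        | (rw [show (8 : ℚ) * (p n : ℚ) = ((8 * p n : ℤ) : ℚ) by
             push_cast; ring]
           exact Rat.den_intCast _)

lemma two_dvd (n : ℕ) (h : 2 ≤ n) : (2 : ℤ) ∣ p n := by
  obtain ⟨m, rfl⟩ : ∃ m, n = m + 2 := ⟨n - 2, by omega⟩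
  show (2 : ℤ) ∣ 8 * p (m + 1) + 2 * p m
  exact Dvd.dvd.add ⟨4 * p (m + 1), by ring⟩ ⟨p m, rfl⟩

lemma four_dvd (n : ℕ) (h : 4 ≤ n) : (4 : ℤ) ∣ p n := by
  obtain ⟨m, rfl⟩ : ∃ m, n = m + 2 := ⟨n - 2, by omega⟩
  obtain ⟨c, hc⟩ := two_dvd m (by omega)
  show (4 : ℤ) ∣ 8 * p (m + 1) + 2 * p m
  exact Dvd.dvd.add ⟨2 * p (m + 1), by ring⟩ ⟨c, by rw [hc]; ring⟩

lemma eight_dvd (n : ℕ) (h : 6 ≤ n) : (8 : ℤ) ∣ p n := by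
  obtain ⟨m, rfl⟩ : ∃ m, n = m + 2 := ⟨n - 2, by omega⟩
  obtain ⟨c, hc⟩ := four_dvd m (by omega)
  show (8 : ℤ) ∣ 8 * p (m + 1) + 2 * p m
  exact Dvd.dvd.add ⟨p (m + 1), by ring⟩ ⟨c, by rw [hc]; ring⟩

lemma sixteen_dvd (n : ℕ) (h : 8 ≤ n) : (16 : ℤ) ∣ p n := by
  obtain ⟨m, rfl⟩ : ∃ m, n = m + 2 := ⟨n - 2, by omega⟩
  obtain ⟨c, hc⟩ := eight_dvd m (by omega)
  obtain ⟨d, hd⟩ := two_dvd (m + 1) (by omega)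
  show (16 : ℤ) ∣ 8 * p (m + 1) + 2 * p m
  exact Dvd.dvd.add ⟨d, by rw [hd]; ring⟩ ⟨c, by rw [hc]; ring⟩

lemma dvd_iff (n : ℕ) : (16 : ℤ) ∣ p n ↔ (n = 0 ∨ n = 4 ∨ n = 6 ∨ 8 ≤ n) := by
  constructor
  · intro h
    by_contra hc
    push_neg at hc
    obtain ⟨h0, h4, h6, h8⟩ := hc
    interval_cases n <;> first | omega | (revert h; decide)
  · rintro (rfl | rfl | rfl | h)
    · decide
    · decide
    · decide
    · exact sixteen_dvd n h

/-- The target submonoid. -/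
def S : AddSubmonoid ℕ where
  carrier := {n | n = 0 ∨ n = 4 ∨ n = 6 ∨ 8 ≤ n}
  zero_mem' := Or.inl rfl
  add_mem' := by
    rintro a b (rfl | rfl | rfl | ha) (rfl | rfl | rfl | hb) <;> simp_all <;> omega

lemma mem_closure_of_ge (n : ℕ) (h : 8 ≤ n) :
    n ∈ AddSubmonoid.closure ({4, 6, 9, 11} : Set ℕ) := by
  induction n using Nat.strong_induction_on with
  | _ n ih =>
    have g4 : (4 : ℕ) ∈ AddSubmonoid.closure ({4, 6, 9, 11} : Set ℕ) :=
      AddSubmonoid.subset_closure (by simp)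
    have g6 : (6 : ℕ) ∈ AddSubmonoid.closure ({4, 6, 9, 11} : Set ℕ) :=
      AddSubmonoid.subset_closure (by simp)
    rcases Nat.lt_or_ge n 12 with h12 | h12
    · interval_cases n
      · exact AddSubmonoid.add_mem _ g4 g4
      · exact AddSubmonoid.subset_closure (by simp)
      · exact AddSubmonoid.add_mem _ g4 g6
      · exact AddSubmonoid.subset_closure (by simp)
    · have : n - 4 + 4 = n := by omega
      rw [← this]
      exact AddSubmonoid.add_mem _ (ih (n - 4) (by omega) (by omega)) g4

lemma closure_eq :
    (AddSubmonoid.closure ({4, 6, 9, 11} : Set ℕ) : Set ℕ) =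
      {n | n = 0 ∨ n = 4 ∨ n = 6 ∨ 8 ≤ n} := by
  apply Set.Subset.antisymm
  · intro n hn
    exact (AddSubmonoid.closure_le (S := S)).2 (by
      rintro x (rfl | rfl | rfl | rfl) <;> simp [S]) hn
  · rintro n (rfl | rfl | rfl | h)
    · exact AddSubmonoid.zero_mem _
    · exact AddSubmonoid.subset_closure (by simp)
    · exact AddSubmonoid.subset_closure (by simp)
    · exact mem_closure_of_ge n h

end ExpAux

theorem expSet_explicit_matrix :
    expSet (!![(0 : ℚ), 32; 1/16, 8]) =
      (AddSubmonoid.closure {4, 6, 9, 11} : Set ℕ) := by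
  ext n
  rw [ExpAux.mem_expSet_iff, ExpAux.dvd_iff, ExpAux.closure_eq]
  rfl
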